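/- arXiv:1703.06463 — 2 statements merged into one kernel-verified Lean document; each statement's English description precedes it below -/
import Mathlib

section
/- Let α ≥ 0 and β be real numbers, let C = [[α, β], [−β, α]], let M be a real symmetric positive definite n×n matrix, let A be a real symmetric positive semidefinite n×n matrix, let P be a real symmetric positive definite n×n matrix, and let Δt ≥ 0. Set 𝔹 = (I₂ ⊗ P^{-1/2})(I₂ ⊗ M + Δt·(C ⊗ A))(I₂ ⊗ P^{-1/2}). Then the symmetric part (𝔹 + 𝔹ᵀ)/2 is positive definite and κ̃(𝔹) ≤ (λ_max(P^{-1/2} M P^{-1/2}) + Δt · √(α² + β²) · λ_max(P^{-1/2} A P^{-1/2})) / (λ_min(P^{-1/2} M P^{-1/2}) + Δt · α · λ_min(P^{-1/2} A P^{-1/2})). -/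
open Matrix Kronecker

/-- The smallest eigenvalue of a (symmetric) real matrix, as the infimum of its spectrum. -/
noncomputable def lamMin {m : Type*} [Fintype m] [DecidableEq m] (A : Matrix m m ℝ) : ℝ :=
  sInf (spectrum ℝ A)

/-- The largest eigenvalue of a (symmetric) real matrix, as the supremum of its spectrum. -/
noncomputable def lamMax {m : Type*} [Fintype m] [DecidableEq m] (A : Matrix m m ℝ) : ℝ :=
  sSup (spectrum ℝ A)

/-- The largest singular value of a real square matrix. -/
noncomputable def sigmaMax {m : Type*} [Fintype m] [DecidableEq m] (B : Matrix m m ℝ) : ℝ :=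
  Real.sqrt (lamMax (Bᵀ * B))

/-- `P^{-1/2}`: the inverse of the unique symmetric positive definite square root of `P`. -/
noncomputable def Matrix.PosDef.invSqrt {m : Type*} [Fintype m] [DecidableEq m]
    {P : Matrix m m ℝ} (hP : P.PosDef) : Matrix m m ℝ :=
  (hP.posSemidef.1.eigenvectorUnitary.1 * diagonal ((↑) ∘ (√·) ∘ hP.posSemidef.1.eigenvalues) *
    (star hP.posSemidef.1.eigenvectorUnitary : Matrix m m ℝ))⁻¹

/-- The modified condition number `κ̃(B) = σ_max(B) / λ_min((B + Bᵀ)/2)`. -/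
noncomputable def ktilde {m : Type*} [Fintype m] [DecidableEq m] (B : Matrix m m ℝ) : ℝ :=
  sigmaMax B / lamMin ((1 / 2 : ℝ) • (B + Bᵀ))

set_option linter.unusedSectionVars false
set_option linter.unusedSectionVars false

section helpers
variable {m : Type*} [Fintype m] [DecidableEq m]

lemma dot_self_nonneg' (x : m → ℝ) : 0 ≤ x ⬝ᵥ x :=
  Finset.sum_nonneg fun i _ => mul_self_nonneg (x i)

lemma dot_self_pos' {x : m → ℝ} (hx : x ≠ 0) : 0 < x ⬝ᵥ x := by
  obtain ⟨i, hi⟩ := Function.ne_iff.mp hx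
  exact Finset.sum_pos' (fun j _ => mul_self_nonneg (x j))
    ⟨i, Finset.mem_univ i, mul_self_pos.mpr hi⟩

lemma psd_dot {S : Matrix m m ℝ} (hS : S.PosSemidef) (x : m → ℝ) :
    0 ≤ x ⬝ᵥ (S *ᵥ x) := by simpa using hS.dotProduct_mulVec_nonneg x

lemma spec_eq_range {S : Matrix m m ℝ} (hS : S.IsHermitian) :
    spectrum ℝ S = Set.range hS.eigenvalues := hS.spectrum_real_eq_range_eigenvalues

lemma spec_nonempty [Nonempty m] {S : Matrix m m ℝ} (hS : S.IsHermitian) :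
    (spectrum ℝ S).Nonempty := by
  rw [spec_eq_range hS]; exact Set.range_nonempty _

lemma lamMax_mem [Nonempty m] {S : Matrix m m ℝ} (hS : S.IsHermitian) :
    lamMax S ∈ spectrum ℝ S :=
  (spec_nonempty hS).csSup_mem (finite_real_spectrum (A := S))

lemma lamMin_mem [Nonempty m] {S : Matrix m m ℝ} (hS : S.IsHermitian) :
    lamMin S ∈ spectrum ℝ S :=
  (spec_nonempty hS).csInf_mem (finite_real_spectrum (A := S))

lemma eig_le_lamMax {S : Matrix m m ℝ} (hS : S.IsHermitian) (i : m) :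
    hS.eigenvalues i ≤ lamMax S :=
  le_csSup (finite_real_spectrum (A := S)).bddAbove (hS.eigenvalues_mem_spectrum_real i)

lemma lamMin_le_eig {S : Matrix m m ℝ} (hS : S.IsHermitian) (i : m) :
    lamMin S ≤ hS.eigenvalues i :=
  csInf_le (finite_real_spectrum (A := S)).bddBelow (hS.eigenvalues_mem_spectrum_real i)

lemma exists_eigvec {S : Matrix m m ℝ} (hS : S.IsHermitian) {t : ℝ}
    (ht : t ∈ spectrum ℝ S) : ∃ v : m → ℝ, v ≠ 0 ∧ S *ᵥ v = t • v := by
  rw [spec_eq_range hS] at ht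
  obtain ⟨i, rfl⟩ := ht
  refine ⟨⇑(hS.eigenvectorBasis i), ?_, hS.mulVec_eigenvectorBasis i⟩
  intro h
  exact hS.eigenvectorBasis.orthonormal.ne_zero i (by ext j; exact congrFun h j)
end helpers

section helpers2
variable {m : Type*} [Fintype m] [DecidableEq m] {S : Matrix m m ℝ}

lemma ofReal_comp (f : m → ℝ) : (RCLike.ofReal ∘ f : m → ℝ) = f := by
  ext i; simp

lemma conj_psd (hS : S.IsHermitian) {g : m → ℝ} (hg : ∀ i, 0 ≤ g i) :
    ((hS.eigenvectorUnitary : Matrix m m ℝ) * Matrix.diagonal g *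
      star (hS.eigenvectorUnitary : Matrix m m ℝ)).PosSemidef := by
  simpa [Matrix.star_eq_conjTranspose] using
    (Matrix.PosSemidef.diagonal (by exact hg : (0 : m → ℝ) ≤ g)).mul_mul_conjTranspose_same
      (hS.eigenvectorUnitary : Matrix m m ℝ)

lemma spectral_real (hS : S.IsHermitian) :
    S = (hS.eigenvectorUnitary : Matrix m m ℝ) * Matrix.diagonal hS.eigenvalues *
      star (hS.eigenvectorUnitary : Matrix m m ℝ) := by
  conv_lhs => rw [hS.spectral_theorem]
  simp only [Unitary.conjStarAlgAut_apply, ofReal_comp, Unitary.coe_star]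

lemma smul_one_conj (hS : S.IsHermitian) (c : ℝ) :
    (hS.eigenvectorUnitary : Matrix m m ℝ) * Matrix.diagonal (fun _ : m => c) *
      star (hS.eigenvectorUnitary : Matrix m m ℝ) = c • 1 := by
  have hU : (hS.eigenvectorUnitary : Matrix m m ℝ) * star (hS.eigenvectorUnitary : Matrix m m ℝ)
      = 1 := (Matrix.mem_unitaryGroup_iff).mp hS.eigenvectorUnitary.2
  have : Matrix.diagonal (fun _ : m => c) = c • (1 : Matrix m m ℝ) := by
    ext i j
    by_cases h : i = j <;> simp [Matrix.diagonal_apply, Matrix.one_apply, h]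
  rw [this, Matrix.mul_smul, mul_one, Matrix.smul_mul, hU]

lemma shift_psd (hS : S.IsHermitian) {c : ℝ} (hc : ∀ i, c ≤ hS.eigenvalues i) :
    (S - c • 1).PosSemidef := by
  have key : S - c • (1 : Matrix m m ℝ) =
      (hS.eigenvectorUnitary : Matrix m m ℝ) *
        Matrix.diagonal (fun i => hS.eigenvalues i - c) *
        star (hS.eigenvectorUnitary : Matrix m m ℝ) := by
    have : Matrix.diagonal (fun i => hS.eigenvalues i - c) =
        Matrix.diagonal hS.eigenvalues - Matrix.diagonal (fun _ : m => c) := by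
      rw [← Matrix.diagonal_sub]
    rw [this, Matrix.mul_sub, Matrix.sub_mul, ← spectral_real hS, smul_one_conj hS]
  rw [key]
  exact conj_psd hS fun i => sub_nonneg.mpr (hc i)

lemma shift_psd' (hS : S.IsHermitian) {c : ℝ} (hc : ∀ i, hS.eigenvalues i ≤ c) :
    (c • 1 - S).PosSemidef := by
  have key : c • (1 : Matrix m m ℝ) - S =
      (hS.eigenvectorUnitary : Matrix m m ℝ) *
        Matrix.diagonal (fun i => c - hS.eigenvalues i) *
        star (hS.eigenvectorUnitary : Matrix m m ℝ) := by
    have : Matrix.diagonal (fun i => c - hS.eigenvalues i) =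
        Matrix.diagonal (fun _ : m => c) - Matrix.diagonal hS.eigenvalues := by
      rw [← Matrix.diagonal_sub]
    rw [this, Matrix.mul_sub, Matrix.sub_mul, ← spectral_real hS, smul_one_conj hS]
  rw [key]
  exact conj_psd hS fun i => sub_nonneg.mpr (hc i)

lemma sq_shift_psd (hS : S.PosSemidef) :
    ((lamMax S) ^ 2 • 1 - S * S).PosSemidef := by
  have hU' : star (hS.1.eigenvectorUnitary : Matrix m m ℝ) *
      (hS.1.eigenvectorUnitary : Matrix m m ℝ) = 1 :=
    Unitary.coe_star_mul_self hS.1.eigenvectorUnitary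
  have hSS : S * S = (hS.1.eigenvectorUnitary : Matrix m m ℝ) *
      Matrix.diagonal (fun i => hS.1.eigenvalues i * hS.1.eigenvalues i) *
      star (hS.1.eigenvectorUnitary : Matrix m m ℝ) := by
    conv_lhs => rw [spectral_real hS.1]
    rw [← Matrix.diagonal_mul_diagonal]
    simp only [Matrix.mul_assoc]
    rw [← Matrix.mul_assoc (star (hS.1.eigenvectorUnitary : Matrix m m ℝ))
      (hS.1.eigenvectorUnitary : Matrix m m ℝ), hU', Matrix.one_mul]
  have key : (lamMax S) ^ 2 • (1 : Matrix m m ℝ) - S * S =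
      (hS.1.eigenvectorUnitary : Matrix m m ℝ) *
        Matrix.diagonal (fun i => (lamMax S) ^ 2 - hS.1.eigenvalues i * hS.1.eigenvalues i) *
        star (hS.1.eigenvectorUnitary : Matrix m m ℝ) := by
    have : Matrix.diagonal (fun i => (lamMax S) ^ 2 - hS.1.eigenvalues i * hS.1.eigenvalues i) =
        Matrix.diagonal (fun _ : m => (lamMax S) ^ 2) -
          Matrix.diagonal (fun i => hS.1.eigenvalues i * hS.1.eigenvalues i) := by
      rw [← Matrix.diagonal_sub]
    rw [this, Matrix.mul_sub, Matrix.sub_mul, ← hSS, smul_one_conj hS.1]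
  rw [key]
  refine conj_psd hS.1 fun i => sub_nonneg.mpr ?_
  have h1 := hS.eigenvalues_nonneg i
  have h2 := eig_le_lamMax hS.1 i
  nlinarith

lemma lamMin_dot_le (hS : S.IsHermitian) (x : m → ℝ) :
    lamMin S * (x ⬝ᵥ x) ≤ x ⬝ᵥ (S *ᵥ x) := by
  have h := psd_dot (shift_psd hS (lamMin_le_eig hS)) x
  rw [Matrix.sub_mulVec, Matrix.smul_mulVec, Matrix.one_mulVec, dotProduct_sub,
    dotProduct_smul, smul_eq_mul, sub_nonneg] at h
  exact h

lemma dot_le_lamMax (hS : S.IsHermitian) (x : m → ℝ) :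
    x ⬝ᵥ (S *ᵥ x) ≤ lamMax S * (x ⬝ᵥ x) := by
  have h := psd_dot (shift_psd' hS (eig_le_lamMax hS)) x
  rw [Matrix.sub_mulVec, Matrix.smul_mulVec, Matrix.one_mulVec, dotProduct_sub,
    dotProduct_smul, smul_eq_mul, sub_nonneg] at h
  exact h
end helpers2

section helpers3
variable {m l : Type*} [Fintype m] [DecidableEq m] [Fintype l] [DecidableEq l]

lemma cs_dot (x y : m → ℝ) : x ⬝ᵥ y ≤ Real.sqrt (x ⬝ᵥ x) * Real.sqrt (y ⬝ᵥ y) := by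
  have h := Finset.sum_mul_sq_le_sq_mul_sq Finset.univ x y
  have h2 : (x ⬝ᵥ y) ^ 2 ≤ (x ⬝ᵥ x) * (y ⬝ᵥ y) := by
    simpa [dotProduct, pow_two, Finset.sum_mul] using h
  calc x ⬝ᵥ y ≤ |x ⬝ᵥ y| := le_abs_self _
    _ = Real.sqrt ((x ⬝ᵥ y) ^ 2) := (Real.sqrt_sq_eq_abs _).symm
    _ ≤ Real.sqrt ((x ⬝ᵥ x) * (y ⬝ᵥ y)) := Real.sqrt_le_sqrt h2
    _ = Real.sqrt (x ⬝ᵥ x) * Real.sqrt (y ⬝ᵥ y) := Real.sqrt_mul (dot_self_nonneg' x) _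

lemma nrm_add (x y : m → ℝ) :
    Real.sqrt ((x + y) ⬝ᵥ (x + y)) ≤ Real.sqrt (x ⬝ᵥ x) + Real.sqrt (y ⬝ᵥ y) := by
  have hexp : (x + y) ⬝ᵥ (x + y) = x ⬝ᵥ x + 2 * (x ⬝ᵥ y) + y ⬝ᵥ y := by
    rw [add_dotProduct, dotProduct_add, dotProduct_add,
      dotProduct_comm y x]; ring
  have hcs := cs_dot x y
  have hx := Real.sq_sqrt (dot_self_nonneg' x)
  have hy := Real.sq_sqrt (dot_self_nonneg' y)
  have hb : (x + y) ⬝ᵥ (x + y) ≤ (Real.sqrt (x ⬝ᵥ x) + Real.sqrt (y ⬝ᵥ y)) ^ 2 := by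
    rw [hexp]; nlinarith
  calc Real.sqrt ((x + y) ⬝ᵥ (x + y)) ≤ Real.sqrt ((Real.sqrt (x ⬝ᵥ x) + Real.sqrt (y ⬝ᵥ y)) ^ 2) :=
        Real.sqrt_le_sqrt hb
    _ = _ := Real.sqrt_sq (by positivity)

lemma nrm_smul (c : ℝ) (hc : 0 ≤ c) (x : m → ℝ) :
    Real.sqrt ((c • x) ⬝ᵥ (c • x)) = c * Real.sqrt (x ⬝ᵥ x) := by
  have : (c • x) ⬝ᵥ (c • x) = c ^ 2 * (x ⬝ᵥ x) := by
    rw [smul_dotProduct, dotProduct_smul]; simp [smul_eq_mul]; ring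
  rw [this, Real.sqrt_mul (by positivity), Real.sqrt_sq hc]

lemma mulVec_dot (X : Matrix m m ℝ) (v : m → ℝ) :
    (X *ᵥ v) ⬝ᵥ (X *ᵥ v) = v ⬝ᵥ ((Xᵀ * X) *ᵥ v) := by
  rw [← Matrix.mulVec_mulVec, Matrix.dotProduct_mulVec v, Matrix.vecMul_transpose]

lemma sigmaMax_le [Nonempty m] {X : Matrix m m ℝ} {c : ℝ} (hc : 0 ≤ c)
    (h : ∀ v : m → ℝ, (X *ᵥ v) ⬝ᵥ (X *ᵥ v) ≤ c ^ 2 * (v ⬝ᵥ v)) : sigmaMax X ≤ c := by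
  have hherm : (Xᵀ * X).IsHermitian := by
    have := Matrix.isHermitian_conjTranspose_mul_self X
    rwa [Matrix.conjTranspose_eq_transpose_of_trivial] at this
  obtain ⟨v, hv0, hv⟩ := exists_eigvec hherm (lamMax_mem hherm)
  have hray : lamMax (Xᵀ * X) * (v ⬝ᵥ v) ≤ c ^ 2 * (v ⬝ᵥ v) := by
    have := h v
    rwa [mulVec_dot, hv, dotProduct_smul, smul_eq_mul] at this
  have hle : lamMax (Xᵀ * X) ≤ c ^ 2 :=
    le_of_mul_le_mul_right (by simpa [mul_comm] using hray) (dot_self_pos' hv0)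
  calc sigmaMax X = Real.sqrt (lamMax (Xᵀ * X)) := rfl
    _ ≤ Real.sqrt (c ^ 2) := Real.sqrt_le_sqrt hle
    _ = c := Real.sqrt_sq hc

lemma kron_one_dot (T : Matrix m m ℝ) (x : l × m → ℝ) :
    x ⬝ᵥ (((1 : Matrix l l ℝ) ⊗ₖ T) *ᵥ x) =
      ∑ i : l, (fun j => x (i, j)) ⬝ᵥ (T *ᵥ fun j => x (i, j)) := by
  simp [dotProduct, Matrix.mulVec, Fintype.sum_prod_type, Matrix.one_apply,
    Finset.mul_sum, ite_mul, zero_mul, Finset.sum_ite_eq, mul_assoc]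

lemma dot_split (x : l × m → ℝ) :
    x ⬝ᵥ x = ∑ i : l, (fun j => x (i, j)) ⬝ᵥ (fun j => x (i, j)) := by
  simp [dotProduct, Fintype.sum_prod_type]

lemma kron_one_herm {T : Matrix m m ℝ} (hT : T.IsHermitian) :
    ((1 : Matrix l l ℝ) ⊗ₖ T).IsHermitian := by
  have hsym : Tᵀ = T := by
    rw [← Matrix.conjTranspose_eq_transpose_of_trivial]; exact hT
  rw [Matrix.IsHermitian, Matrix.conjTranspose_eq_transpose_of_trivial,
    ← Matrix.kroneckerMap_transpose, Matrix.transpose_one, hsym]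

lemma kron_one_psd {T : Matrix m m ℝ} (hT : T.PosSemidef) :
    ((1 : Matrix l l ℝ) ⊗ₖ T).PosSemidef := by
  refine Matrix.PosSemidef.of_dotProduct_mulVec_nonneg (kron_one_herm hT.1) fun x => ?_
  simp only [star_trivial, kron_one_dot]
  exact Finset.sum_nonneg fun i _ => psd_dot hT _

lemma kron_one_posdef {T : Matrix m m ℝ} (hT : T.PosDef) :
    ((1 : Matrix l l ℝ) ⊗ₖ T).PosDef := by
  refine Matrix.PosDef.of_dotProduct_mulVec_pos (kron_one_herm hT.1) fun x hx => ?_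
  simp only [star_trivial, kron_one_dot]
  obtain ⟨⟨i, j⟩, hij⟩ := Function.ne_iff.mp hx
  have hslice : (fun j => x (i, j)) ≠ 0 := by
    intro h; exact hij (congrFun h j)
  refine Finset.sum_pos' (fun k _ => psd_dot hT.posSemidef _) ⟨i, Finset.mem_univ i, ?_⟩
  simpa using hT.dotProduct_mulVec_pos hslice

end helpers3

section helpers4
variable {m l : Type*} [Fintype m] [DecidableEq m] [Fintype l] [DecidableEq l]

lemma psd_sub_dot {X : Matrix m m ℝ} {c : ℝ} (h : (c • 1 - X).PosSemidef) (x : m → ℝ) :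
    x ⬝ᵥ (X *ᵥ x) ≤ c * (x ⬝ᵥ x) := by
  have hd := psd_dot h x
  rw [Matrix.sub_mulVec, Matrix.smul_mulVec, Matrix.one_mulVec, dotProduct_sub,
    dotProduct_smul, smul_eq_mul, sub_nonneg] at hd
  exact hd

lemma lamMax_nonneg_psd [Nonempty m] {T : Matrix m m ℝ} (hT : T.PosSemidef) : 0 ≤ lamMax T := by
  have h := lamMax_mem hT.1
  rw [spec_eq_range hT.1] at h
  obtain ⟨i, hi⟩ := h
  rw [← hi]; exact hT.eigenvalues_nonneg i

lemma lamMin_pos_posdef [Nonempty m] {T : Matrix m m ℝ} (hT : T.PosDef) : 0 < lamMin T := by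
  have h := lamMin_mem hT.1
  rw [spec_eq_range hT.1] at h
  obtain ⟨i, hi⟩ := h
  rw [← hi]; exact hT.eigenvalues_pos i

lemma lamMin_nonneg_psd [Nonempty m] {T : Matrix m m ℝ} (hT : T.PosSemidef) : 0 ≤ lamMin T := by
  have h := lamMin_mem hT.1
  rw [spec_eq_range hT.1] at h
  obtain ⟨i, hi⟩ := h
  rw [← hi]; exact hT.eigenvalues_nonneg i

lemma le_lamMin_of_psd [Nonempty m] {X : Matrix m m ℝ} (hX : X.IsHermitian) {c : ℝ}
    (h : (X - c • 1).PosSemidef) : c ≤ lamMin X := by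
  obtain ⟨v, hv0, hv⟩ := exists_eigvec hX (lamMin_mem hX)
  have hd := psd_dot h v
  rw [Matrix.sub_mulVec, Matrix.smul_mulVec, Matrix.one_mulVec, dotProduct_sub,
    dotProduct_smul, smul_eq_mul, sub_nonneg, hv, dotProduct_smul,
    smul_eq_mul] at hd
  exact le_of_mul_le_mul_right (by simpa [mul_comm] using hd) (dot_self_pos' hv0)

lemma posSemidef_smul {X : Matrix m m ℝ} (hX : X.PosSemidef) {c : ℝ} (hc : 0 ≤ c) :
    (c • X).PosSemidef := by
  refine Matrix.PosSemidef.of_dotProduct_mulVec_nonneg ?_ fun x => ?_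
  · rw [Matrix.IsHermitian, Matrix.conjTranspose_smul]
    simp only [star_trivial]
    rw [hX.1.eq]
  · rw [Matrix.smul_mulVec, dotProduct_smul, smul_eq_mul]
    exact mul_nonneg hc (hX.dotProduct_mulVec_nonneg x)

lemma posdef_of_psd_isUnit {X : Matrix m m ℝ} (hX : X.PosSemidef) (hU : IsUnit X) : X.PosDef := by
  refine Matrix.PosDef.of_dotProduct_mulVec_pos hX.1 fun x hx => ?_
  rcases lt_or_eq_of_le (hX.dotProduct_mulVec_nonneg x) with h | h
  · exact h
  · exfalso
    have h0 : X *ᵥ x = 0 := (hX.dotProduct_mulVec_zero_iff x).mp h.symm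
    have hinj := Matrix.mulVec_injective_iff_isUnit.mpr hU
    exact hx (hinj (by rw [h0, Matrix.mulVec_zero]))

lemma posdef_conj {X Q : Matrix m m ℝ} (hX : X.PosDef) (hQh : Q.IsHermitian) (hQu : IsUnit Q) :
    (Q * X * Q).PosDef := by
  refine Matrix.PosDef.of_dotProduct_mulVec_pos ?_ fun x hx => ?_
  · have := Matrix.isHermitian_conjTranspose_mul_mul Q hX.1
    rwa [hQh.eq] at this
  · have hQx : Q *ᵥ x ≠ 0 := by
      intro h
      exact hx (Matrix.mulVec_injective_iff_isUnit.mpr hQu (by rw [h, Matrix.mulVec_zero]))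
    have key : star x ⬝ᵥ ((Q * X * Q) *ᵥ x) = star (Q *ᵥ x) ⬝ᵥ (X *ᵥ (Q *ᵥ x)) := by
      simp only [star_trivial, ← Matrix.mulVec_mulVec]
      rw [Matrix.dotProduct_mulVec x Q, ← Matrix.mulVec_transpose]
      have : Qᵀ = Q := by rw [← Matrix.conjTranspose_eq_transpose_of_trivial, hQh.eq]
      rw [this]
    rw [key]
    exact hX.dotProduct_mulVec_pos hQx

lemma kron_sq_dot_le [Nonempty m] {T : Matrix m m ℝ} (hT : T.PosSemidef) (v : l × m → ℝ) :
    v ⬝ᵥ (((1 : Matrix l l ℝ) ⊗ₖ (T * T)) *ᵥ v) ≤ (lamMax T) ^ 2 * (v ⬝ᵥ v) := by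
  rw [kron_one_dot, dot_split]
  rw [Finset.mul_sum]
  exact Finset.sum_le_sum fun i _ => psd_sub_dot (sq_shift_psd hT) _

lemma kron_one_mulVec_sq_le [Nonempty m] {T : Matrix m m ℝ} (hT : T.PosSemidef) (v : l × m → ℝ) :
    (((1 : Matrix l l ℝ) ⊗ₖ T) *ᵥ v) ⬝ᵥ (((1 : Matrix l l ℝ) ⊗ₖ T) *ᵥ v) ≤
      (lamMax T) ^ 2 * (v ⬝ᵥ v) := by
  rw [mulVec_dot]
  have htr : ((1 : Matrix l l ℝ) ⊗ₖ T)ᵀ = (1 : Matrix l l ℝ) ⊗ₖ T := by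
    rw [← Matrix.conjTranspose_eq_transpose_of_trivial, (kron_one_herm hT.1).eq]
  rw [htr, ← Matrix.mul_kronecker_mul, Matrix.one_mul]
  exact kron_sq_dot_le hT v

lemma kron_one_sub_smul_one (T : Matrix m m ℝ) (c : ℝ) :
    (1 : Matrix l l ℝ) ⊗ₖ (T - c • 1) = (1 : Matrix l l ℝ) ⊗ₖ T - c • 1 := by
  rw [sub_eq_add_neg, ← neg_smul, Matrix.kronecker_add, Matrix.kronecker_smul,
    Matrix.one_kronecker_one, neg_smul, ← sub_eq_add_neg]

end helpers4

theorem stmt7 (n : ℕ) (hn : 1 ≤ n) (α β : ℝ) (hα : 0 ≤ α)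
    (C : Matrix (Fin 2) (Fin 2) ℝ) (hC : C = !![α, β; -β, α])
    (M A P : Matrix (Fin n) (Fin n) ℝ)
    (hM : M.PosDef) (hA : A.PosSemidef) (hP : P.PosDef)
    (Δt : ℝ) (hΔt : 0 ≤ Δt)
    (B : Matrix (Fin 2 × Fin n) (Fin 2 × Fin n) ℝ)
    (hB : B = ((1 : Matrix (Fin 2) (Fin 2) ℝ) ⊗ₖ hP.invSqrt) *
        ((1 : Matrix (Fin 2) (Fin 2) ℝ) ⊗ₖ M + Δt • (C ⊗ₖ A)) *
        ((1 : Matrix (Fin 2) (Fin 2) ℝ) ⊗ₖ hP.invSqrt)) :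
    ((1 / 2 : ℝ) • (B + Bᵀ)).PosDef ∧
    ktilde B ≤
      (lamMax (hP.invSqrt * M * hP.invSqrt)
          + Δt * Real.sqrt (α ^ 2 + β ^ 2) * lamMax (hP.invSqrt * A * hP.invSqrt)) /
      (lamMin (hP.invSqrt * M * hP.invSqrt)
          + Δt * α * lamMin (hP.invSqrt * A * hP.invSqrt)) := by
  haveI : Nonempty (Fin n) := Fin.pos_iff_nonempty.mp hn
  set Q : Matrix (Fin n) (Fin n) ℝ := hP.invSqrt with hQdef
  -- Q is positive definite
  have hQpd : Q.PosDef := by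
    rw [hQdef, Matrix.PosDef.invSqrt]
    refine Matrix.PosDef.inv ?_
    have hD : (diagonal ((↑) ∘ (√·) ∘ hP.posSemidef.1.eigenvalues) :
        Matrix (Fin n) (Fin n) ℝ).PosDef :=
      Matrix.PosDef.diagonal fun i => by simpa using hP.eigenvalues_pos i
    have hUu : IsUnit (hP.posSemidef.1.eigenvectorUnitary : Matrix (Fin n) (Fin n) ℝ) :=
      ⟨⟨_, _, Unitary.coe_mul_star_self hP.posSemidef.1.eigenvectorUnitary,
        Unitary.coe_star_mul_self hP.posSemidef.1.eigenvectorUnitary⟩, rfl⟩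
    simpa [Matrix.star_eq_conjTranspose] using
      hD.mul_mul_conjTranspose_same (Matrix.vecMul_injective_iff_isUnit.mpr hUu)
  have hQh : Q.IsHermitian := hQpd.1
  have hQu : IsUnit Q := hQpd.isUnit
  have hQt : Qᵀ = Q := by rw [← Matrix.conjTranspose_eq_transpose_of_trivial, hQh.eq]
  set S₁ : Matrix (Fin n) (Fin n) ℝ := Q * M * Q with hS₁def
  set S₂ : Matrix (Fin n) (Fin n) ℝ := Q * A * Q with hS₂def
  have hS₁ : S₁.PosDef := posdef_conj hM hQh hQu
  have hS₂ : S₂.PosSemidef := by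
    have := hA.mul_mul_conjTranspose_same Q
    rwa [hQh.eq] at this
  have hS₁t : S₁ᵀ = S₁ := by rw [← Matrix.conjTranspose_eq_transpose_of_trivial, hS₁.1.eq]
  have hS₂t : S₂ᵀ = S₂ := by rw [← Matrix.conjTranspose_eq_transpose_of_trivial, hS₂.1.eq]
  -- decompose B
  have hBkron : B = (1 : Matrix (Fin 2) (Fin 2) ℝ) ⊗ₖ S₁ + Δt • (C ⊗ₖ S₂) := by
    rw [hB, Matrix.mul_add, Matrix.add_mul]
    rw [Matrix.mul_smul, Matrix.smul_mul]
    rw [← Matrix.mul_kronecker_mul, ← Matrix.mul_kronecker_mul,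
      ← Matrix.mul_kronecker_mul, ← Matrix.mul_kronecker_mul]
    simp only [Matrix.mul_one, Matrix.one_mul]
    rfl
  -- transpose of B
  have hCt : Cᵀ = !![α, -β; β, α] := by
    rw [hC]; ext i j; fin_cases i <;> fin_cases j <;> simp
  have hBt : Bᵀ = (1 : Matrix (Fin 2) (Fin 2) ℝ) ⊗ₖ S₁ + Δt • (Cᵀ ⊗ₖ S₂) := by
    rw [hBkron, Matrix.transpose_add, Matrix.transpose_smul,
      ← Matrix.kroneckerMap_transpose, ← Matrix.kroneckerMap_transpose,
      Matrix.transpose_one, hS₁t, hS₂t]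
  -- symmetric part
  have hCsum : C + Cᵀ = (2 * α) • (1 : Matrix (Fin 2) (Fin 2) ℝ) := by
    rw [hCt, hC]; ext i j; fin_cases i <;> fin_cases j <;>
      simp [Matrix.one_apply] <;> ring
  set W : Matrix (Fin n) (Fin n) ℝ := S₁ + (Δt * α) • S₂ with hWdef
  have hsym : (1 / 2 : ℝ) • (B + Bᵀ) = (1 : Matrix (Fin 2) (Fin 2) ℝ) ⊗ₖ W := by
    rw [hBt, hBkron, hWdef]
    rw [Matrix.kronecker_add, Matrix.kronecker_smul]
    have hCC : C ⊗ₖ S₂ + Cᵀ ⊗ₖ S₂ = (2 * α) • ((1 : Matrix (Fin 2) (Fin 2) ℝ) ⊗ₖ S₂) := by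
      rw [← Matrix.add_kronecker, hCsum, Matrix.smul_kronecker]
    have expand : (1 : Matrix (Fin 2) (Fin 2) ℝ) ⊗ₖ S₁ + Δt • (C ⊗ₖ S₂) +
        ((1 : Matrix (Fin 2) (Fin 2) ℝ) ⊗ₖ S₁ + Δt • (Cᵀ ⊗ₖ S₂)) =
        (2 : ℝ) • ((1 : Matrix (Fin 2) (Fin 2) ℝ) ⊗ₖ S₁) +
          Δt • (C ⊗ₖ S₂ + Cᵀ ⊗ₖ S₂) := by
      rw [smul_add]; module
    rw [expand, hCC]
    rw [smul_smul]
    rw [smul_add, smul_smul, smul_smul]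
    congr 1
    · norm_num
    · congr 1; ring
  have hWpd : W.PosDef := hS₁.add_posSemidef (posSemidef_smul hS₂ (by positivity))
  have hsympd : ((1 / 2 : ℝ) • (B + Bᵀ)).PosDef := by
    rw [hsym]; exact kron_one_posdef hWpd
  refine ⟨hsympd, ?_⟩
  -- abbreviations
  set a := lamMax S₁ with hadef
  set b := lamMax S₂ with hbdef
  set g := Real.sqrt (α ^ 2 + β ^ 2) with hgdef
  have ha0 : 0 ≤ a := lamMax_nonneg_psd hS₁.posSemidef
  have hb0 : 0 ≤ b := lamMax_nonneg_psd hS₂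
  have hg0 : 0 ≤ g := Real.sqrt_nonneg _
  -- numerator bound
  have hCtC : Cᵀ * C = (α ^ 2 + β ^ 2) • (1 : Matrix (Fin 2) (Fin 2) ℝ) := by
    rw [hCt, hC]; ext i j; fin_cases i <;> fin_cases j <;>
      simp [Matrix.mul_apply, Fin.sum_univ_two, Matrix.one_apply] <;> ring
  have hnum : sigmaMax B ≤ a + Δt * g * b := by
    refine sigmaMax_le (by positivity) fun v => ?_
    have hv0 : 0 ≤ v ⬝ᵥ v := dot_self_nonneg' v
    have hBv : B *ᵥ v = ((1 : Matrix (Fin 2) (Fin 2) ℝ) ⊗ₖ S₁) *ᵥ v +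
        Δt • ((C ⊗ₖ S₂) *ᵥ v) := by
      rw [hBkron, Matrix.add_mulVec, Matrix.smul_mulVec]
    -- bound each piece in norm
    have h1 : Real.sqrt ((((1 : Matrix (Fin 2) (Fin 2) ℝ) ⊗ₖ S₁) *ᵥ v) ⬝ᵥ
        (((1 : Matrix (Fin 2) (Fin 2) ℝ) ⊗ₖ S₁) *ᵥ v)) ≤ a * Real.sqrt (v ⬝ᵥ v) := by
      have := kron_one_mulVec_sq_le hS₁.posSemidef v
      calc Real.sqrt _ ≤ Real.sqrt (a ^ 2 * (v ⬝ᵥ v)) := Real.sqrt_le_sqrt this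
        _ = a * Real.sqrt (v ⬝ᵥ v) := by
            rw [Real.sqrt_mul (by positivity), Real.sqrt_sq ha0]
    have h2 : Real.sqrt (((C ⊗ₖ S₂) *ᵥ v) ⬝ᵥ ((C ⊗ₖ S₂) *ᵥ v)) ≤
        g * (b * Real.sqrt (v ⬝ᵥ v)) := by
      have hsq : ((C ⊗ₖ S₂) *ᵥ v) ⬝ᵥ ((C ⊗ₖ S₂) *ᵥ v) ≤
          (α ^ 2 + β ^ 2) * (b ^ 2 * (v ⬝ᵥ v)) := by
        rw [mulVec_dot, ← Matrix.kroneckerMap_transpose, ← Matrix.mul_kronecker_mul,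
          hCtC, hS₂t, Matrix.smul_kronecker, Matrix.smul_mulVec,
          dotProduct_smul, smul_eq_mul]
        have := kron_sq_dot_le hS₂ v
        have hab : (0:ℝ) ≤ α ^ 2 + β ^ 2 := by positivity
        exact mul_le_mul_of_nonneg_left this hab
      calc Real.sqrt _ ≤ Real.sqrt ((α ^ 2 + β ^ 2) * (b ^ 2 * (v ⬝ᵥ v))) :=
            Real.sqrt_le_sqrt hsq
        _ = g * (b * Real.sqrt (v ⬝ᵥ v)) := by
            rw [Real.sqrt_mul (by positivity), Real.sqrt_mul (by positivity),
              Real.sqrt_sq hb0]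
    have htri : Real.sqrt ((B *ᵥ v) ⬝ᵥ (B *ᵥ v)) ≤ (a + Δt * g * b) * Real.sqrt (v ⬝ᵥ v) := by
      rw [hBv]
      calc Real.sqrt _ ≤ Real.sqrt ((((1 : Matrix (Fin 2) (Fin 2) ℝ) ⊗ₖ S₁) *ᵥ v) ⬝ᵥ
            (((1 : Matrix (Fin 2) (Fin 2) ℝ) ⊗ₖ S₁) *ᵥ v)) +
            Real.sqrt ((Δt • ((C ⊗ₖ S₂) *ᵥ v)) ⬝ᵥ (Δt • ((C ⊗ₖ S₂) *ᵥ v))) := nrm_add _ _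
        _ ≤ a * Real.sqrt (v ⬝ᵥ v) + Δt * (g * (b * Real.sqrt (v ⬝ᵥ v))) := by
            rw [nrm_smul Δt hΔt]
            exact add_le_add h1 (mul_le_mul_of_nonneg_left h2 hΔt)
        _ = (a + Δt * g * b) * Real.sqrt (v ⬝ᵥ v) := by ring
    have := mul_self_le_mul_self (Real.sqrt_nonneg ((B *ᵥ v) ⬝ᵥ (B *ᵥ v))) htri
    rw [Real.mul_self_sqrt (dot_self_nonneg' _)] at this
    calc (B *ᵥ v) ⬝ᵥ (B *ᵥ v) ≤ ((a + Δt * g * b) * Real.sqrt (v ⬝ᵥ v)) *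
          ((a + Δt * g * b) * Real.sqrt (v ⬝ᵥ v)) := this
      _ = (a + Δt * g * b) ^ 2 * (v ⬝ᵥ v) := by
          rw [mul_mul_mul_comm, Real.mul_self_sqrt hv0]; ring
  -- denominator bound
  set c₁ := lamMin S₁ with hc₁def
  set c₂ := lamMin S₂ with hc₂def
  have hc₁0 : 0 < c₁ := lamMin_pos_posdef hS₁
  have hc₂0 : 0 ≤ c₂ := lamMin_nonneg_psd hS₂
  have hden0 : 0 < c₁ + Δt * α * c₂ := by positivity
  have hWshift : (W - (c₁ + Δt * α * c₂) • 1).PosSemidef := by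
    have key : W - (c₁ + Δt * α * c₂) • (1 : Matrix (Fin n) (Fin n) ℝ) =
        (S₁ - c₁ • 1) + (Δt * α) • (S₂ - c₂ • 1) := by
      rw [hWdef]; module
    rw [key]
    exact (shift_psd hS₁.1 (lamMin_le_eig hS₁.1)).add
      (posSemidef_smul (shift_psd hS₂.1 (lamMin_le_eig hS₂.1)) (by positivity))
  have hlam : c₁ + Δt * α * c₂ ≤ lamMin ((1 / 2 : ℝ) • (B + Bᵀ)) := by
    rw [hsym]
    refine le_lamMin_of_psd (kron_one_herm hWpd.1) ?_
    rw [← kron_one_sub_smul_one]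
    exact kron_one_psd hWshift
  -- conclude
  rw [ktilde]
  exact div_le_div₀ (by positivity) hnum hden0 hlam
end

section
/- Let α ≥ 0 and β be real numbers, let C = [[α, β], [−β, α]], let M be a real symmetric positive definite n×n matrix, let A be a real symmetric positive semidefinite n×n matrix, and let Δt ≥ 0. Set 𝔹 = I₂ ⊗ M + Δt·(C ⊗ A). Then the symmetric part satisfies (𝔹 + 𝔹ᵀ)/2 = I₂ ⊗ (M + Δt·α·A), this symmetric part is positive definite, and consequently 𝔹 is invertible. -/
open Matrix Kronecker

lemma one_kron_posDef {n : ℕ} {P : Matrix (Fin n) (Fin n) ℝ} (hP : P.PosDef) :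
    ((1 : Matrix (Fin 2) (Fin 2) ℝ) ⊗ₖ P).PosDef := by
  refine Matrix.PosDef.of_dotProduct_mulVec_pos ?_ ?_
  · show ((1 : Matrix (Fin 2) (Fin 2) ℝ) ⊗ₖ P)ᴴ = _
    have hPt : Pᵀ = P := hP.isHermitian.eq
    rw [conjTranspose_eq_transpose_of_trivial, ← kroneckerMap_transpose,
      transpose_one, hPt]
  · intro x hx
    have key : dotProduct (star x) (((1 : Matrix (Fin 2) (Fin 2) ℝ) ⊗ₖ P) *ᵥ x)
        = ∑ i : Fin 2, dotProduct (star (fun j => x (i, j))) (P *ᵥ (fun j => x (i, j))) := by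
      simp only [dotProduct, mulVec, dotProduct, kroneckerMap_apply, Fintype.sum_prod_type,
        star_trivial, one_apply]
      refine Finset.sum_congr rfl fun i _ => Finset.sum_congr rfl fun j _ => ?_
      rw [Finset.sum_comm]
      simp [Finset.mul_sum, ite_mul, mul_comm, mul_left_comm]
    rw [key]
    obtain ⟨⟨i0, j0⟩, hij⟩ := Function.ne_iff.mp hx
    have hne : (fun j => x (i0, j)) ≠ 0 := by
      intro h; exact hij (congrFun h j0)
    have hpos : 0 < dotProduct (star (fun j => x (i0, j))) (P *ᵥ (fun j => x (i0, j))) :=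
      hP.dotProduct_mulVec_pos hne
    have hnonneg : ∀ i : Fin 2, 0 ≤ dotProduct (star (fun j => x (i, j))) (P *ᵥ (fun j => x (i, j))) :=
      fun i => hP.posSemidef.dotProduct_mulVec_nonneg _
    calc 0 < dotProduct (star (fun j => x (i0, j))) (P *ᵥ (fun j => x (i0, j))) := hpos
      _ ≤ ∑ i : Fin 2, dotProduct (star (fun j => x (i, j))) (P *ᵥ (fun j => x (i, j))) :=
        Finset.single_le_sum (fun i _ => hnonneg i) (Finset.mem_univ i0)

lemma possemidef_smul {n : ℕ} {A : Matrix (Fin n) (Fin n) ℝ} (hA : A.PosSemidef)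
    {c : ℝ} (hc : 0 ≤ c) : (c • A).PosSemidef := by
  refine Matrix.PosSemidef.of_dotProduct_mulVec_nonneg ?_ fun x => ?_
  · show (c • A)ᴴ = _
    rw [conjTranspose_smul, hA.1.eq, star_trivial]
  · rw [smul_mulVec, dotProduct_smul, smul_eq_mul]
    exact mul_nonneg hc (hA.dotProduct_mulVec_nonneg x)

theorem stmt16 (n : ℕ) (α β : ℝ) (hα : 0 ≤ α)
    (C : Matrix (Fin 2) (Fin 2) ℝ) (hC : C = !![α, β; -β, α])
    (M A : Matrix (Fin n) (Fin n) ℝ)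
    (hM : M.PosDef) (hA : A.PosSemidef)
    (Δt : ℝ) (hΔt : 0 ≤ Δt)
    (B : Matrix (Fin 2 × Fin n) (Fin 2 × Fin n) ℝ)
    (hB : B = (1 : Matrix (Fin 2) (Fin 2) ℝ) ⊗ₖ M + Δt • (C ⊗ₖ A)) :
    (1 / 2 : ℝ) • (B + Bᵀ) =
        (1 : Matrix (Fin 2) (Fin 2) ℝ) ⊗ₖ (M + (Δt * α) • A) ∧
    ((1 / 2 : ℝ) • (B + Bᵀ)).PosDef ∧
    IsUnit B := by
  have hMt : Mᵀ = M := hM.isHermitian.eq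
  have hAt : Aᵀ = A := hA.isHermitian.eq
  have hsym : (1 / 2 : ℝ) • (B + Bᵀ) =
      (1 : Matrix (Fin 2) (Fin 2) ℝ) ⊗ₖ (M + (Δt * α) • A) := by
    subst hB hC
    ext ⟨i, j⟩ ⟨k, l⟩
    simp only [Matrix.smul_apply, Matrix.add_apply, transpose_apply, kroneckerMap_apply, smul_eq_mul,
      one_apply]
    have hA' : A l j = A j l := by
      have := congrFun (congrFun hAt j) l; rwa [transpose_apply] at this
    have hM' : M l j = M j l := by
      have := congrFun (congrFun hMt j) l; rwa [transpose_apply] at this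
    fin_cases i <;> fin_cases k <;>
      simp_all [Matrix.cons_val_zero, Matrix.cons_val_one] <;> ring
  refine ⟨hsym, ?_, ?_⟩
  · rw [hsym]
    exact one_kron_posDef (hM.add_posSemidef (possemidef_smul hA (mul_nonneg hΔt hα)))
  · have hpd : ((1 / 2 : ℝ) • (B + Bᵀ)).PosDef := by
      rw [hsym]
      exact one_kron_posDef (hM.add_posSemidef (possemidef_smul hA (mul_nonneg hΔt hα)))
    rw [Matrix.isUnit_iff_isUnit_det, isUnit_iff_ne_zero]
    intro hdet
    obtain ⟨v, hv0, hv⟩ := (Matrix.exists_mulVec_eq_zero_iff).mpr hdet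
    have h1 : dotProduct v (B *ᵥ v) = 0 := by rw [hv, dotProduct_zero]
    have h2 : dotProduct v (Bᵀ *ᵥ v) = 0 := by
      rw [mulVec_transpose, dotProduct_comm, ← dotProduct_mulVec, hv, dotProduct_zero]
    have := hpd.dotProduct_mulVec_pos hv0
    rw [smul_mulVec, add_mulVec, dotProduct_smul, dotProduct_add, star_trivial,
      h1, h2] at this
    simp at this
end
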